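/- Fix a target example x ∈ ℝ^d with true class mean m_x, shots S ≥ 1 and in-class standard deviation s > 0 with x ≠ 0 and ⟨x, x − m_x⟩ ≠ 0. Model the IN and OUT score distributions of x as Gaussian with common standard deviation σ = s·‖x‖/√S, OUT mean μ = ⟨x, m_x⟩, and IN mean μ + δ where δ = ⟨x, x − m_x⟩/S. For any threshold τ, define TPR and FPR as the probabilities that the IN-score, respectively the OUT-score, falls in the rejection region, taken to be {score ≥ τ} when δ > 0 and {score ≤ τ} when δ < 0. Then TPR = Φ(Φ⁻¹(FPR) + |⟨x, x − m_x⟩|/(√S · s · ‖x‖)). -/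

import Mathlib

open MeasureTheory ProbabilityTheory

/-- `Φ`, the CDF of the standard normal distribution. -/
noncomputable def stdGaussianCDF (x : ℝ) : ℝ :=
  (gaussianReal 0 1 (Set.Iic x)).toReal


lemma gauss_eq_map (μ σ : ℝ) (hσ : 0 < σ) :
    gaussianReal μ (Real.toNNReal (σ ^ 2)) =
      (gaussianReal 0 1).map (fun y => σ * y + μ) := by
  have h1 : (gaussianReal 0 1).map (fun y => σ * y) = gaussianReal 0 (Real.toNNReal (σ ^ 2)) := by
    have := gaussianReal_map_const_mul (μ := 0) (v := 1) σ
    simp only [mul_zero] at this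
    rw [this]
    congr 1
    ext
    simp [Real.coe_toNNReal _ (sq_nonneg σ)]
  have hmeas : Measurable (fun y : ℝ => σ * y) := by fun_prop
  have : (fun y : ℝ => σ * y + μ) = (· + μ) ∘ (fun y => σ * y) := rfl
  rw [this, ← Measure.map_map (by fun_prop) hmeas, h1, gaussianReal_map_add_const, zero_add]

lemma gauss_Iic (μ σ t : ℝ) (hσ : 0 < σ) :
    (gaussianReal μ (Real.toNNReal (σ ^ 2)) (Set.Iic t)).toReal
      = stdGaussianCDF ((t - μ) / σ) := by
  rw [gauss_eq_map μ σ hσ, Measure.map_apply (by fun_prop) measurableSet_Iic]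
  congr 2
  ext y
  simp only [Set.mem_preimage, Set.mem_Iic]
  rw [le_div_iff₀ hσ]
  constructor <;> intro h <;> nlinarith

lemma std_neg (c : ℝ) : gaussianReal 0 1 (Set.Ici c) = gaussianReal 0 1 (Set.Iic (-c)) := by
  have h := gaussianReal_map_const_mul (μ := 0) (v := 1) (-1)
  have h1 : (NNReal.mk ((-1:ℝ)^2) (sq_nonneg _)) * 1 = 1 := by ext; norm_num
  rw [mul_zero, h1] at h
  conv_lhs => rw [← h]
  rw [Measure.map_apply (by fun_prop) measurableSet_Ici]
  congr 1
  ext y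
  simp only [Set.mem_preimage, Set.mem_Ici, Set.mem_Iic]
  constructor <;> intro <;> linarith

lemma gauss_Ici (μ σ t : ℝ) (hσ : 0 < σ) :
    (gaussianReal μ (Real.toNNReal (σ ^ 2)) (Set.Ici t)).toReal
      = stdGaussianCDF ((μ - t) / σ) := by
  rw [gauss_eq_map μ σ hσ, Measure.map_apply (by fun_prop) measurableSet_Ici]
  have : (fun y : ℝ => σ * y + μ) ⁻¹' Set.Ici t = Set.Ici ((t - μ) / σ) := by
    ext y
    simp only [Set.mem_preimage, Set.mem_Ici]
    rw [div_le_iff₀ hσ]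
    constructor <;> intro h <;> nlinarith
  rw [this, std_neg, stdGaussianCDF]
  congr 3
  field_simp
  ring

lemma stdGaussianCDF_injective : Function.Injective stdGaussianCDF := by
  have hmono : StrictMono stdGaussianCDF := by
    intro p q hpq
    have hd : Set.Iic q = Set.Iic p ∪ Set.Ioc p q := (Set.Iic_union_Ioc_eq_Iic hpq.le).symm
    have hdisj : Disjoint (Set.Iic p) (Set.Ioc p q) := by
      simp [Set.disjoint_left]
      intro z hz h2 
      linarith
    have hfin : ∀ S : Set ℝ, gaussianReal 0 1 S ≠ ⊤ := fun S => measure_ne_top _ _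
    have hpos : (0:ENNReal) < gaussianReal 0 1 (Set.Ioc p q) := by
      rw [pos_iff_ne_zero]
      intro h0
      have := (gaussianReal_absolutelyContinuous' 0 (v := 1) one_ne_zero) h0
      rw [Real.volume_Ioc] at this
      simp at this
      linarith
    unfold stdGaussianCDF
    rw [hd, measure_union hdisj measurableSet_Ioc, ENNReal.toReal_add (hfin _) (hfin _)]
    have := ENNReal.toReal_pos hpos.ne' (hfin _)
    linarith
  exact hmono.injective

/-- First part of Theorem 1 (per-example LiRA power-law): with IN/OUT scores Gaussian with
common standard deviation `σ = s·‖x‖/√S`, OUT mean `μ = ⟨x, m_x⟩`, IN mean `μ + δ` with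
`δ = ⟨x, x − m_x⟩/S`, rejection region `{score ≥ τ}` if `δ > 0` and `{score ≤ τ}` if `δ < 0`,
we get `TPR = Φ(Φ⁻¹(FPR) + |⟨x, x − m_x⟩|/(√S·s·‖x‖))`, where `a` plays the role of `Φ⁻¹(FPR)`. -/
theorem stmt_6 {d : ℕ} (x mx : Fin d → ℝ) (S : ℕ) (hS : 1 ≤ S) (s : ℝ) (hs : 0 < s)
    (hx : x ≠ 0) (hip : (∑ j, x j * (x j - mx j)) ≠ 0)
    (μ δ σ : ℝ)
    (hμ : μ = ∑ j, x j * mx j)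
    (hδ : δ = (∑ j, x j * (x j - mx j)) / S)
    (hσ : σ = s * Real.sqrt (∑ j, x j ^ 2) / Real.sqrt S)
    (τ FPR TPR : ℝ)
    (hpos : 0 < δ →
      FPR = (gaussianReal μ (Real.toNNReal (σ ^ 2)) (Set.Ici τ)).toReal ∧
      TPR = (gaussianReal (μ + δ) (Real.toNNReal (σ ^ 2)) (Set.Ici τ)).toReal)
    (hneg : δ < 0 →
      FPR = (gaussianReal μ (Real.toNNReal (σ ^ 2)) (Set.Iic τ)).toReal ∧
      TPR = (gaussianReal (μ + δ) (Real.toNNReal (σ ^ 2)) (Set.Iic τ)).toReal)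
    (a : ℝ) (ha : stdGaussianCDF a = FPR) :
    TPR = stdGaussianCDF (a +
      |∑ j, x j * (x j - mx j)| / (Real.sqrt S * s * Real.sqrt (∑ j, x j ^ 2))) := by
  set ip := ∑ j, x j * (x j - mx j) with hipdef
  have hSpos : (0:ℝ) < S := by positivity
  have hsum : 0 < ∑ j, x j ^ 2 := by
    rcases Function.ne_iff.mp hx with ⟨j, hj⟩
    exact Finset.sum_pos' (fun i _ => sq_nonneg _) ⟨j, Finset.mem_univ j, by have hj' : x j ≠ 0 := hj; positivity⟩
  have hsqS : 0 < Real.sqrt S := Real.sqrt_pos.mpr hSpos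
  have hsqsum : 0 < Real.sqrt (∑ j, x j ^ 2) := Real.sqrt_pos.mpr hsum
  have hσpos : 0 < σ := by rw [hσ]; positivity
  have hSS : Real.sqrt S * Real.sqrt S = S := Real.mul_self_sqrt hSpos.le
  have key : δ / σ = ip / (Real.sqrt S * s * Real.sqrt (∑ j, x j ^ 2)) := by
    rw [hδ, hσ]
    field_simp
    linear_combination hSS
  rcases lt_or_gt_of_ne (show δ ≠ 0 by rw [hδ]; exact div_ne_zero hip hSpos.ne') with hδn | hδp
  · have hipneg : ip < 0 := by
      by_contra h
      push_neg at h
      have : 0 ≤ δ := by rw [hδ]; positivity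
      linarith
    obtain ⟨hF, hT⟩ := hneg hδn
    rw [gauss_Iic _ _ _ hσpos] at hF hT
    have ha' : a = (τ - μ) / σ := stdGaussianCDF_injective (ha.trans hF)
    rw [hT]
    congr 1
    rw [ha', abs_of_neg hipneg, show (τ - (μ + δ)) / σ = (τ - μ)/σ + (-δ)/σ by ring,
      neg_div, key, neg_div]
  · have hippos : 0 < ip := by
      by_contra h
      push_neg at h
      have : δ ≤ 0 := by
        rw [hδ]
        exact div_nonpos_of_nonpos_of_nonneg h hSpos.le
      linarith
    obtain ⟨hF, hT⟩ := hpos hδp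
    rw [gauss_Ici _ _ _ hσpos] at hF hT
    have ha' : a = (μ - τ) / σ := stdGaussianCDF_injective (ha.trans hF)
    rw [hT]
    congr 1
    rw [ha', abs_of_pos hippos, show (μ + δ - τ) / σ = (μ - τ)/σ + δ/σ by ring, key]
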